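/- Define κ : ℝ → ℝ by κ(t) = {t/2} + 1/2 − {t/2 + 1/2}, where {x} is the fractional part of x. Then for every complex number s with Re(s) > 0, s · ∫₁^∞ κ(t) · t^(−s−1) dt = Σ_{k=1}^∞ ∫_{2k−1}^{2k} s · t^(−s−1) dt, where the series on the right converges. -/

import Mathlib

noncomputable def kappa (t : ℝ) : ℝ := Int.fract (t / 2) + 1 / 2 - Int.fract (t / 2 + 1 / 2)

lemma kappa_one {k : ℕ} {t : ℝ} (h1 : 2*(k:ℝ)+1 < t) (h2 : t < 2*(k:ℝ)+2) : kappa t = 1 := by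
  have hf1 : ⌊t/2⌋ = (k:ℤ) := by
    rw [Int.floor_eq_iff]; push_cast; constructor <;> linarith
  have hf2 : ⌊t/2 + 1/2⌋ = (k:ℤ) + 1 := by
    rw [Int.floor_eq_iff]; push_cast; constructor <;> linarith
  unfold kappa
  rw [Int.fract, Int.fract, hf1, hf2]
  push_cast; ring

lemma kappa_zero {k : ℕ} {t : ℝ} (h1 : 2*(k:ℝ)+2 < t) (h2 : t < 2*(k:ℝ)+3) : kappa t = 0 := by
  have hf1 : ⌊t/2⌋ = (k:ℤ) + 1 := by
    rw [Int.floor_eq_iff]; push_cast; constructor <;> linarith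
  have hf2 : ⌊t/2 + 1/2⌋ = (k:ℤ) + 1 := by
    rw [Int.floor_eq_iff]; push_cast; constructor <;> linarith
  unfold kappa
  rw [Int.fract, Int.fract, hf1, hf2]
  push_cast; ring

lemma iUnion_Ioc_eq_Ioi : ⋃ n : ℕ, Set.Ioc (1 + (n:ℝ)) (1 + (n:ℝ) + 1) = Set.Ioi 1 := by
  ext t
  simp only [Set.mem_iUnion, Set.mem_Ioc, Set.mem_Ioi]
  constructor
  · rintro ⟨n, h1, _⟩
    have := n.cast_nonneg (α := ℝ)
    linarith
  · intro ht
    have h0 : 0 < t - 1 := by linarith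
    have hc : 1 ≤ ⌈t-1⌉ := Int.ceil_pos.mpr h0
    have hcast : (((⌈t-1⌉ - 1).toNat : ℕ) : ℝ) = (⌈t-1⌉:ℝ) - 1 := by
      exact_mod_cast congrArg (fun z : ℤ => (z:ℝ)) (Int.toNat_of_nonneg (by omega))
    refine ⟨(⌈t-1⌉ - 1).toNat, ?_, ?_⟩
    · rw [hcast]
      have := Int.ceil_lt_add_one (t-1)
      linarith
    · rw [hcast]
      have := Int.le_ceil (t-1)
      linarith

lemma measurable_kappa : Measurable kappa := by
  unfold kappa
  exact ((measurable_fract.comp (measurable_id.div_const 2)).add_const (1/2)).sub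
    (measurable_fract.comp ((measurable_id.div_const 2).add_const (1/2)))

theorem integral_eq_sum_of_integrals (s : ℂ) (hs : 0 < s.re) :
    (Summable fun k : ℕ =>
      ∫ t in (2 * (k : ℝ) + 1)..(2 * (k : ℝ) + 2), s * (t : ℂ) ^ (-s - 1)) ∧
    s * ∫ t in Set.Ioi (1 : ℝ), (kappa t : ℂ) * (t : ℂ) ^ (-s - 1) =
      ∑' k : ℕ, ∫ t in (2 * (k : ℝ) + 1)..(2 * (k : ℝ) + 2), s * (t : ℂ) ^ (-s - 1) := by
  set f : ℝ → ℂ := fun t => (kappa t : ℂ) * (t:ℂ) ^ (-s-1) with hf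
  set S : ℕ → Set ℝ := fun n => Set.Ioc (1 + (n:ℝ)) (1 + (n:ℝ) + 1) with hS
  have hcp : MeasureTheory.IntegrableOn (fun t : ℝ => (t:ℂ) ^ (-s-1)) (Set.Ioi 1) :=
    integrableOn_Ioi_cpow_of_lt (by simp; linarith) one_pos
  have hg : MeasureTheory.IntegrableOn (fun t : ℝ => (2:ℂ) * (t:ℂ) ^ (-s-1)) (Set.Ioi 1) :=
    hcp.const_mul 2
  have hint : MeasureTheory.IntegrableOn f (Set.Ioi 1) := by
    refine hg.integrable.mono ?_ ?_
    · exact ((Complex.measurable_ofReal.comp measurable_kappa).aestronglyMeasurable).mul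
        hcp.aestronglyMeasurable
    · filter_upwards with t
      simp only [hf, norm_mul]
      have h1 := Int.fract_nonneg (t/2); have h2 := Int.fract_lt_one (t/2)
      have h3 := Int.fract_nonneg (t/2+1/2); have h4 := Int.fract_lt_one (t/2+1/2)
      have hk : ‖((kappa t : ℝ) : ℂ)‖ ≤ ‖(2:ℂ)‖ := by
        rw [Complex.norm_real]
        simp only [Complex.norm_ofNat]
        rw [Real.norm_eq_abs, abs_le]
        unfold kappa
        constructor <;> linarith
      exact mul_le_mul_of_nonneg_right hk (norm_nonneg _)
  have hmeas : ∀ n, MeasurableSet (S n) := fun n => measurableSet_Ioc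
  have hdisj : Pairwise (Function.onFun Disjoint S) := by
    intro i j hij
    simp only [Function.onFun, hS]
    rw [Set.Ioc_disjoint_Ioc]
    rcases hij.lt_or_gt with h | h
    · have : (i:ℝ) + 1 ≤ j := by exact_mod_cast h
      exact le_trans (min_le_left _ _) (le_trans (by linarith) (le_max_right _ _))
    · have : (j:ℝ) + 1 ≤ i := by exact_mod_cast h
      exact le_trans (min_le_right _ _) (le_trans (by linarith) (le_max_left _ _))
  have hintU : MeasureTheory.IntegrableOn f (⋃ n, S n) := by
    rw [hS, iUnion_Ioc_eq_Ioi]; exact hint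
  have hsum : HasSum (fun n => ∫ t in S n, f t) (∫ t in Set.Ioi (1:ℝ), f t) := by
    have := MeasureTheory.hasSum_integral_iUnion hmeas hdisj hintU
    rwa [hS, iUnion_Ioc_eq_Ioi] at this
  have hodd : ∀ k : ℕ, (∫ t in S (2*k+1), f t) = 0 := by
    intro k
    have hset : S (2*k+1) = Set.Ioc (2*(k:ℝ)+2) (2*(k:ℝ)+3) := by
      rw [hS]; push_cast; ring_nf
    rw [hset, MeasureTheory.integral_Ioc_eq_integral_Ioo]
    rw [MeasureTheory.setIntegral_congr_fun measurableSet_Ioo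
      (g := fun _ => (0:ℂ)) ?_]
    · simp
    · intro t ht
      simp only [hf]
      rw [kappa_zero ht.1 ht.2]
      simp
  have hinj : Function.Injective (fun k : ℕ => 2*k) := fun a b h => by dsimp at h; omega
  have hvan : ∀ n ∉ Set.range (fun k : ℕ => 2*k), (∫ t in S n, f t) = 0 := by
    intro n hn
    rcases Nat.even_or_odd n with he | ho
    · obtain ⟨r, hr⟩ := he
      exact absurd ⟨r, by dsimp; omega⟩ hn
    · obtain ⟨k, hk⟩ := ho
      rw [hk]; exact hodd k
  have heven : HasSum (fun k => ∫ t in S (2*k), f t) (∫ t in Set.Ioi (1:ℝ), f t) :=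
    (hinj.hasSum_iff hvan).mpr hsum
  have hterm : ∀ k : ℕ, (∫ t in (2*(k:ℝ)+1)..(2*(k:ℝ)+2), s * (t:ℂ)^(-s-1))
      = s * ∫ t in S (2*k), f t := by
    intro k
    have hset : S (2*k) = Set.Ioc (2*(k:ℝ)+1) (2*(k:ℝ)+2) := by
      rw [hS]; push_cast; ring_nf
    rw [intervalIntegral.integral_of_le (by linarith), MeasureTheory.integral_const_mul, hset]
    congr 1
    rw [MeasureTheory.integral_Ioc_eq_integral_Ioo, MeasureTheory.integral_Ioc_eq_integral_Ioo]
    refine (MeasureTheory.setIntegral_congr_fun measurableSet_Ioo ?_).symm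
    intro t ht
    simp only [hf]
    rw [kappa_one ht.1 ht.2]
    simp
  have hfinal : HasSum (fun k : ℕ =>
      ∫ t in (2*(k:ℝ)+1)..(2*(k:ℝ)+2), s * (t:ℂ)^(-s-1))
      (s * ∫ t in Set.Ioi (1:ℝ), f t) := by
    rw [show (fun k : ℕ => ∫ t in (2*(k:ℝ)+1)..(2*(k:ℝ)+2), s * (t:ℂ)^(-s-1))
      = fun k => s * ∫ t in S (2*k), f t from funext hterm]
    exact heven.mul_left s
  exact ⟨hfinal.summable, hfinal.tsum_eq.symm⟩
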